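/- Let W = {W(t), t ∈ [0,1]} be a standard Wiener process and define X(t) = W(t) − (1/2)(W(1/2) + W(1)) for t ∈ [0,1] (so that X is the solution of Ẋ = Ẇ with the lateral condition X(1/2) + X(1) = 0). Then X is not a Markov field; specifically, the σ-fields σ(X(1/2)) and σ(X(1)) are not conditionally independent given σ(X(0), X(2/3)). -/

import Mathlib

open MeasureTheory Set

noncomputable section

private lemma affine_vol (c : ℝ) (T : Set ℝ) :
    (volume : Measure ℝ) ((fun u : ℝ => -u - c) ⁻¹' T) = volume T := by
  have h : (fun u : ℝ => -u - c) = (fun w : ℝ => -w) ∘ (fun u : ℝ => u + c) := by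
    funext u; simp; ring
  rw [h, Set.preimage_comp]
  rw [measure_preimage_add_right]
  exact Measure.measure_preimage_neg volume T

private def badSet (M : Set (ℝ × ℝ)) : Set ((ℝ × ℝ) × ℝ) :=
  {p | ¬ ((0 ≤ p.1.1 + p.1.2) ↔
    ((-p.2 - (p.1.1 + p.1.2)/2, (p.1.1 - p.1.2)/2) ∈ M))}

private lemma badSet_meas (M : Set (ℝ × ℝ)) (hM : MeasurableSet M) :
    MeasurableSet (badSet M) := by
  have hgm : Measurable (fun p : (ℝ × ℝ) × ℝ =>
      ((-p.2 - (p.1.1 + p.1.2)/2, (p.1.1 - p.1.2)/2) : ℝ × ℝ)) := by fun_prop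
  have hE1 : MeasurableSet {p : (ℝ × ℝ) × ℝ | 0 ≤ p.1.1 + p.1.2} :=
    measurableSet_le measurable_const (by fun_prop)
  have hE2 := hgm hM
  have : badSet M = ({p : (ℝ × ℝ) × ℝ | 0 ≤ p.1.1 + p.1.2} \
        ((fun p : (ℝ × ℝ) × ℝ =>
          ((-p.2 - (p.1.1 + p.1.2)/2, (p.1.1 - p.1.2)/2) : ℝ × ℝ)) ⁻¹' M)) ∪
      (((fun p : (ℝ × ℝ) × ℝ =>
          ((-p.2 - (p.1.1 + p.1.2)/2, (p.1.1 - p.1.2)/2) : ℝ × ℝ)) ⁻¹' M) \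
        {p : (ℝ × ℝ) × ℝ | 0 ≤ p.1.1 + p.1.2}) := by
    ext p
    simp only [badSet, Set.mem_setOf_eq, Set.mem_union, Set.mem_diff, Set.mem_preimage]
    tauto
  rw [this]
  exact (hE1.diff hE2).union (hE2.diff hE1)

private lemma key_measure (M : Set (ℝ × ℝ)) (hM : MeasurableSet M) :
    (volume : Measure ((ℝ × ℝ) × ℝ)) (badSet M) ≠ 0 := by
  rw [badSet]
  set g : (ℝ × ℝ) × ℝ → ℝ × ℝ :=
    fun p => (-p.2 - (p.1.1 + p.1.2)/2, (p.1.1 - p.1.2)/2) with hg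
  have hgm : Measurable g := by fun_prop
  set E₁ : Set ((ℝ × ℝ) × ℝ) := {p | 0 ≤ p.1.1 + p.1.2} with hE₁def
  have hE₁ : MeasurableSet E₁ := measurableSet_le measurable_const (by fun_prop)
  set E₂ : Set ((ℝ × ℝ) × ℝ) := g ⁻¹' M with hE₂def
  have hE₂ : MeasurableSet E₂ := hgm hM
  set E : Set ((ℝ × ℝ) × ℝ) := (E₁ \ E₂) ∪ (E₂ \ E₁) with hEdef
  have hEeq : {p : (ℝ × ℝ) × ℝ | ¬ ((0 ≤ p.1.1 + p.1.2) ↔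
      ((-p.2 - (p.1.1 + p.1.2)/2, (p.1.1 - p.1.2)/2) ∈ M))} = E := by
    ext p; simp only [hEdef, hE₁def, hE₂def, Set.mem_setOf_eq, Set.mem_union,
      Set.mem_diff, Set.mem_preimage, hg]
    tauto
  rw [hEeq]
  have hE : MeasurableSet E := ((hE₁.diff hE₂).union (hE₂.diff hE₁))
  intro h0
  -- sections
  rw [MeasureTheory.Measure.volume_eq_prod, Measure.measure_prod_null hE] at h0
  set Gd : Set (ℝ × ℝ) := {q | (volume : Measure ℝ) (Prod.mk q ⁻¹' E) = 0} with hGd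
  have hGdae : ∀ᵐ q ∂(volume : Measure (ℝ × ℝ)), q ∈ Gd := h0
  have hGdc : (volume : Measure (ℝ × ℝ)) Gdᶜ = 0 := by
    exact ae_iff.mp hGdae
  -- translated good set
  set Gd' : Set (ℝ × ℝ) := (fun q : ℝ × ℝ => q - (1, 1)) ⁻¹' Gd with hGd'
  have hGdc' : (volume : Measure (ℝ × ℝ)) Gd'ᶜ = 0 := by
    have h1 : (Gd'ᶜ : Set (ℝ × ℝ)) = (fun q : ℝ × ℝ => q - (1, 1)) ⁻¹' Gdᶜ := rfl
    have h2 : (fun q : ℝ × ℝ => q - (1, 1)) = (fun q : ℝ × ℝ => q + (-(1, 1))) := by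
      funext q; simp [sub_eq_add_neg]
    rw [h1, h2, measure_preimage_add_right]
    exact hGdc
  -- pick a point
  set S : Set (ℝ × ℝ) := Icc (0:ℝ) (1/2) ×ˢ Icc (0:ℝ) (1/2) with hS
  have hSvol : (volume : Measure (ℝ × ℝ)) S ≠ 0 := by
    rw [MeasureTheory.Measure.volume_eq_prod, Measure.prod_prod, Real.volume_Icc]
    norm_num
  have hpt : ∃ q : ℝ × ℝ, q ∈ S ∧ q ∈ Gd ∧ q ∈ Gd' := by
    by_contra hc
    push_neg at hc
    have hsub : S ⊆ Gdᶜ ∪ Gd'ᶜ := by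
      intro q hq
      by_cases h1 : q ∈ Gd
      · exact Or.inr (hc q hq h1)
      · exact Or.inl h1
    exact hSvol (measure_mono_null hsub (measure_union_null hGdc hGdc'))
  obtain ⟨⟨v, z⟩, hqS, hqGd, hqGd'⟩ := hpt
  rw [hS, Set.mem_prod] at hqS
  obtain ⟨⟨hv0, hv1⟩, ⟨hz0, hz1⟩⟩ := hqS
  set d : ℝ := (v - z)/2 with hd
  -- the section at (v,z): conull in M-section direction
  have hsec1 : (volume : Measure ℝ) {x | (x, d) ∉ M} = 0 := by
    have hvz : 0 ≤ v + z := by linarith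
    have heq : (Prod.mk (v, z) ⁻¹' E)
        = (fun u : ℝ => -u - (v + z)/2) ⁻¹' {x | (x, d) ∉ M} := by
      ext u
      simp only [Set.mem_preimage, ← hEeq, Set.mem_setOf_eq, hvz, true_iff, iff_true]
      rw [hd]
    have := hqGd
    simp only [Gd, Set.mem_setOf_eq, heq, affine_vol] at this
    exact this
  -- the section at (v-1,z-1)
  have hsec2 : (volume : Measure ℝ) {x | (x, d) ∈ M} = 0 := by
    have hvz : ¬ (0 ≤ (v - 1) + (z - 1)) := by push_neg; linarith
    have hd' : ((v - 1) - (z - 1))/2 = d := by rw [hd]; ring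
    have heq : (Prod.mk (v - 1, z - 1) ⁻¹' E)
        = (fun u : ℝ => -u - ((v - 1) + (z - 1))/2) ⁻¹' {x | (x, d) ∈ M} := by
      ext u
      simp only [Set.mem_preimage, ← hEeq, Set.mem_setOf_eq, hvz, false_iff, hd']
      tauto
    have h2 : (v - 1, z - 1) ∈ Gd := by
      have : ((v, z) : ℝ × ℝ) - (1, 1) = (v - 1, z - 1) := by
        simp [Prod.ext_iff]
      rw [hGd'] at hqGd'
      simpa [this] using hqGd'
    simp only [Gd, Set.mem_setOf_eq, heq, affine_vol] at h2
    exact h2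
  have huniv : ({x | (x, d) ∈ M} ∪ {x | (x, d) ∉ M}) = (univ : Set ℝ) := by
    ext x; simp [em]
  have : (volume : Measure ℝ) univ = 0 := by
    rw [← huniv]; exact measure_union_null hsec2 hsec1
  simp [Real.volume_univ] at this

private lemma condexp_extract {Ω : Type*} {G : MeasurableSpace Ω} {mΩ : MeasurableSpace Ω}
    (P : Measure Ω) [IsProbabilityMeasure P]
    (hGm : G ≤ mΩ) (A : Set Ω) (hAm : MeasurableSet[mΩ] A)
    (h : P[A.indicator (fun _ => (1:ℝ)) | G] =ᵐ[P]
      P[A.indicator (fun _ => (1:ℝ)) | G] * P[A.indicator (fun _ => (1:ℝ)) | G]) :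
    ∃ C : Set Ω, MeasurableSet[G] C ∧ P ((A \ C) ∪ (C \ A)) = 0 := by
  haveI : SigmaFinite (P.trim hGm) := inferInstance
  set f := P[A.indicator (fun _ => (1:ℝ)) | G] with hfdef
  set C : Set Ω := f ⁻¹' {1} with hCdef
  have hfsm : StronglyMeasurable[G] f := stronglyMeasurable_condExp
  have hC : MeasurableSet[G] C := hfsm.measurable (measurableSet_singleton 1)
  have hCm : MeasurableSet[mΩ] C := hGm _ hC
  refine ⟨C, hC, ?_⟩
  have hint : Integrable (A.indicator fun _ => (1:ℝ)) P :=
    (integrable_const (1:ℝ)).indicator hAm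
  have h01 : ∀ᵐ ω ∂P, f ω = 0 ∨ f ω = 1 := by
    filter_upwards [h] with ω hω
    have h2 : f ω * (f ω - 1) = 0 := by
      have : f ω = f ω * f ω := hω
      nlinarith [this]
    rcases mul_eq_zero.mp h2 with h3 | h3
    · exact Or.inl h3
    · exact Or.inr (by linarith)
  -- integral over Cᶜ
  have e1 : ∫ x in Cᶜ, f x ∂P = 0 := by
    have hres : ∀ᵐ ω ∂(P.restrict Cᶜ), f ω = 0 := by
      filter_upwards [ae_restrict_of_ae h01, ae_restrict_mem hCm.compl] with ω h1 h2
      rcases h1 with h3 | h3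
      · exact h3
      · exact absurd h3 h2
    rw [integral_congr_ae hres, integral_zero]
  have e2 : ∫ x in Cᶜ, (A.indicator fun _ => (1:ℝ)) x ∂P = (P (Cᶜ ∩ A)).toReal := by
    rw [setIntegral_indicator hAm, setIntegral_const]
    simp
    rfl
  have hPAc : P (Cᶜ ∩ A) = 0 := by
    have := (setIntegral_condExp hGm hint hC.compl).symm
    rw [e2] at this
    rw [← hfdef, e1] at this
    exact ((ENNReal.toReal_eq_zero_iff _).mp this).resolve_right (measure_ne_top P _)
  have e3 : ∫ x in C, f x ∂P = (P C).toReal := by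
    rw [setIntegral_congr_fun hCm (fun x hx => show f x = (1:ℝ) by
      simpa [hCdef] using hx), setIntegral_const]
    simp
    rfl
  have e4 : ∫ x in C, (A.indicator fun _ => (1:ℝ)) x ∂P = (P (C ∩ A)).toReal := by
    rw [setIntegral_indicator hAm, setIntegral_const]
    simp
    rfl
  have hPCA : P (C ∩ A) = P C := by
    have := (setIntegral_condExp hGm hint hC).symm
    rw [e4] at this
    rw [← hfdef, e3] at this
    exact (ENNReal.toReal_eq_toReal_iff' (measure_ne_top P _) (measure_ne_top P _)).mp this
  have hPCdiff : P (C \ A) = 0 := by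
    have hsum := measure_inter_add_diff C hAm (μ := P)
    rw [hPCA] at hsum
    have : P C + P (C \ A) = P C + 0 := by simpa using hsum
    exact (ENNReal.add_right_inj (measure_ne_top P C)).mp this
  have hPAdiff : P (A \ C) = 0 := by
    rw [Set.diff_eq, Set.inter_comm]; exact hPAc
  exact measure_union_null hPAdiff hPCdiff



/-- Two sub-σ-fields `F₁`, `F₂` are conditionally independent given `G` (under `P`) if
`P(A ∩ B | G) = P(A | G) · P(B | G)` a.s. for all `A ∈ F₁`, `B ∈ F₂`. -/
def CondIndepSigma {Ω : Type*} {mΩ : MeasurableSpace Ω} (P : Measure Ω)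
    (G F₁ F₂ : MeasurableSpace Ω) : Prop :=
  ∀ A B : Set Ω, MeasurableSet[F₁] A → MeasurableSet[F₂] B →
    P[(A ∩ B).indicator (fun _ => (1 : ℝ)) | G] =ᵐ[P]
      P[A.indicator (fun _ => (1 : ℝ)) | G] * P[B.indicator (fun _ => (1 : ℝ)) | G]

/-- A standard Wiener process on `[0,1]`: continuous paths, `W 0 = 0`, Gaussian
increments of the right variance, independent increments. -/
structure IsWienerProcess {Ω : Type*} [MeasurableSpace Ω] (P : Measure Ω)
    (W : ℝ → Ω → ℝ) : Prop where
  measurable : ∀ t, Measurable (W t)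
  continuous_paths : ∀ ω, ContinuousOn (fun t => W t ω) (Icc 0 1)
  start_zero : ∀ ω, W 0 ω = 0
  gaussian_increments : ∀ s t : ℝ, 0 ≤ s → s ≤ t → t ≤ 1 →
    P.map (fun ω => W t ω - W s ω) =
      ProbabilityTheory.gaussianReal 0 (Real.toNNReal (t - s))
  indep_increments : ∀ (k : ℕ) (t : Fin (k + 1) → ℝ), Monotone t →
    (∀ i, t i ∈ Icc (0:ℝ) 1) →
    ProbabilityTheory.iIndepFun
      (fun i : Fin k => fun ω => W (t i.succ) ω - W (t i.castSucc) ω) P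

/-- The companion matrix `A(t)` of the differential operator: first row given by the
coefficient functions, `-1` on the subdiagonal, `0` elsewhere. -/
def companion {n : ℕ} (coef : Fin n → ℝ → ℝ) (t : ℝ) : Matrix (Fin n) (Fin n) ℝ :=
  fun i j => if i.val = 0 then coef j t else if i.val = j.val + 1 then -1 else 0

/-- Row `i` (with columns indexed by points `pts`) preserves the pair `(a,b)` if its
support is contained in `]a,b[` or in the complement of `[a,b]` in `[0,1]`. -/
def RowPreserves {n m : ℕ} (pts : Fin m → ℝ) (M : Matrix (Fin n) (Fin m) ℝ)
    (a b : ℝ) (i : Fin n) : Prop :=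
  (∀ j, M i j ≠ 0 → pts j ∈ Ioo a b) ∨ (∀ j, M i j ≠ 0 → pts j ∈ Icc (0:ℝ) 1 \ Icc a b)

/-- The boundary operator preserves `(a,b)` if all its rows do. -/
def MatPreserves {n m : ℕ} (pts : Fin m → ℝ) (M : Matrix (Fin n) (Fin m) ℝ)
    (a b : ℝ) : Prop :=
  ∀ i, RowPreserves pts M a b i


theorem not_markov_field_example
    {Ω : Type*} {mΩ : MeasurableSpace Ω} (P : Measure Ω) [IsProbabilityMeasure P]
    (W : ℝ → Ω → ℝ) (hW : IsWienerProcess P W)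
    (X : ℝ → Ω → ℝ)
    (hX : ∀ t ω, X t ω = W t ω - (W (1/2) ω + W 1 ω) / 2) :
    -- X is not a Markov field ...
    (¬ ∀ a b : ℝ, 0 ≤ a → a < b → b ≤ 1 →
      CondIndepSigma P
        (MeasurableSpace.comap (fun ω => (X a ω, X b ω)) inferInstance)
        (⨆ t ∈ Icc a b, MeasurableSpace.comap (X t) inferInstance)
        (⨆ t ∈ Icc (0:ℝ) 1 \ Ioo a b, MeasurableSpace.comap (X t) inferInstance)) ∧
    -- ... specifically, σ(X(1/2)) and σ(X(1)) are not conditionally independent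
    -- given σ(X(0), X(2/3))
    ¬ CondIndepSigma P
        (MeasurableSpace.comap (fun ω => (X 0 ω, X (2/3) ω)) inferInstance)
        (MeasurableSpace.comap (X (1/2)) inferInstance)
        (MeasurableSpace.comap (X 1) inferInstance) := by
  have hXm : ∀ t, Measurable (X t) := by
    intro t
    have : X t = fun ω => W t ω - (W (1/2) ω + W 1 ω) / 2 := funext (hX t)
    rw [this]
    exact (hW.measurable t).sub
      (((hW.measurable _).add (hW.measurable _)).div_const _)
  have hY : Measurable (fun ω => (X 0 ω, X (2/3) ω)) := (hXm 0).prodMk (hXm (2/3))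
  have hGm : MeasurableSpace.comap (fun ω => (X 0 ω, X (2/3) ω))
      inferInstance ≤ mΩ := by
    rintro s ⟨s', hs', rfl⟩
    exact hY hs'
  have hkey : ¬ CondIndepSigma P
      (MeasurableSpace.comap (fun ω => (X 0 ω, X (2/3) ω)) inferInstance)
      (MeasurableSpace.comap (X (1/2)) inferInstance)
      (MeasurableSpace.comap (X 1) inferInstance) := by
    intro hCI
    -- the two sets
    have hBA : X 1 ⁻¹' Ici 0 = X (1/2) ⁻¹' Iic 0 := by
      ext ω
      simp only [mem_preimage, mem_Ici, mem_Iic, hX]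
      constructor <;> intro <;> linarith
    have hAm : MeasurableSet[mΩ] (X (1/2) ⁻¹' Iic 0) := hXm _ measurableSet_Iic
    have h := hCI (X (1/2) ⁻¹' Iic 0) (X 1 ⁻¹' Ici 0)
      ⟨Iic 0, measurableSet_Iic, rfl⟩ ⟨Ici 0, measurableSet_Ici, rfl⟩
    rw [hBA, Set.inter_self] at h
    obtain ⟨C, hC, hnull⟩ := condexp_extract P hGm (X (1/2) ⁻¹' Iic 0) hAm h
    obtain ⟨M, hM, hCM⟩ := hC
    -- increments
    set Φ : Ω → (ℝ × ℝ) × ℝ := fun ω =>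
      ((W (2/3) ω - W (1/2) ω, W 1 ω - W (2/3) ω), W (1/2) ω - W 0 ω) with hΦdef
    have hUm : Measurable (fun ω => W (1/2) ω - W 0 ω) :=
      (hW.measurable _).sub (hW.measurable _)
    have hVm : Measurable (fun ω => W (2/3) ω - W (1/2) ω) :=
      (hW.measurable _).sub (hW.measurable _)
    have hZm : Measurable (fun ω => W 1 ω - W (2/3) ω) :=
      (hW.measurable _).sub (hW.measurable _)
    have hΦm : Measurable Φ := ((hVm.prodMk hZm).prodMk hUm)
    have hmapΦ : P.map Φ
        = ((ProbabilityTheory.gaussianReal 0 (Real.toNNReal (2/3 - 1/2))).prod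
            (ProbabilityTheory.gaussianReal 0 (Real.toNNReal (1 - 2/3)))).prod
          (ProbabilityTheory.gaussianReal 0 (Real.toNNReal (1/2 - 0))) := by
      set t4 : Fin 4 → ℝ := ![0, 1/2, 2/3, 1] with ht4
      have hmono : Monotone t4 := by
        rw [Fin.monotone_iff_le_succ]
        intro i
        fin_cases i <;> norm_num [t4, Matrix.cons_val_two]
      have hmem : ∀ i, t4 i ∈ Icc (0:ℝ) 1 := by
        intro i; fin_cases i <;> norm_num [t4]
      have hind := hW.indep_increments 3 t4 hmono hmem
      have hfun : (fun i : Fin 3 => fun ω => W (t4 i.succ) ω - W (t4 i.castSucc) ω)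
          = ![fun ω => W (1/2) ω - W 0 ω, fun ω => W (2/3) ω - W (1/2) ω,
              fun ω => W 1 ω - W (2/3) ω] := by
        funext i; fin_cases i <;> rfl
      rw [hfun] at hind
      have hmeas3 : ∀ i, Measurable
          (![fun ω => W (1/2) ω - W 0 ω, fun ω => W (2/3) ω - W (1/2) ω,
              fun ω => W 1 ω - W (2/3) ω] i) := by
        intro i; fin_cases i
        exacts [hUm, hVm, hZm]
      have hVZ : ProbabilityTheory.IndepFun (fun ω => W (2/3) ω - W (1/2) ω)
          (fun ω => W 1 ω - W (2/3) ω) P := by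
        exact hind.indepFun (show (1 : Fin 3) ≠ 2 by decide)
      have hVZ_U : ProbabilityTheory.IndepFun
          (fun ω => (W (2/3) ω - W (1/2) ω, W 1 ω - W (2/3) ω))
          (fun ω => W (1/2) ω - W 0 ω) P := by
        exact hind.indepFun_prodMk hmeas3 1 2 0 (by decide) (by decide)
      have hmapVZ : P.map (fun ω => (W (2/3) ω - W (1/2) ω, W 1 ω - W (2/3) ω))
          = (P.map (fun ω => W (2/3) ω - W (1/2) ω)).prod
            (P.map (fun ω => W 1 ω - W (2/3) ω)) :=
        (ProbabilityTheory.indepFun_iff_map_prod_eq_prod_map_map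
          hVm.aemeasurable hZm.aemeasurable).mp hVZ
      have hmapΦ' := (ProbabilityTheory.indepFun_iff_map_prod_eq_prod_map_map
          ((hVm.prodMk hZm).aemeasurable) hUm.aemeasurable).mp hVZ_U
      rw [hΦdef, hmapΦ', hmapVZ]
      rw [hW.gaussian_increments 0 (1/2) le_rfl (by norm_num) (by norm_num),
          hW.gaussian_increments (1/2) (2/3) (by norm_num) (by norm_num) (by norm_num),
          hW.gaussian_increments (2/3) 1 (by norm_num) (by norm_num) (by norm_num)]
    have hac : (volume : Measure ((ℝ × ℝ) × ℝ)) ≪ P.map Φ := by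
      rw [hmapΦ, MeasureTheory.Measure.volume_eq_prod]
      refine Measure.AbsolutelyContinuous.prod ?_
        (ProbabilityTheory.gaussianReal_absolutelyContinuous' 0
          (by rw [Ne, Real.toNNReal_eq_zero]; norm_num))
      rw [MeasureTheory.Measure.volume_eq_prod]
      exact Measure.AbsolutelyContinuous.prod
        (ProbabilityTheory.gaussianReal_absolutelyContinuous' 0
          (by rw [Ne, Real.toNNReal_eq_zero]; norm_num))
        (ProbabilityTheory.gaussianReal_absolutelyContinuous' 0
          (by rw [Ne, Real.toNNReal_eq_zero]; norm_num))
    -- identify the null set with the preimage of `badSet M`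
    have hEq : (X (1/2) ⁻¹' Iic 0 \ C) ∪ (C \ X (1/2) ⁻¹' Iic 0)
        = Φ ⁻¹' badSet M := by
      ext ω
      have hA_iff : (X (1/2) ω ∈ Iic 0)
          ↔ 0 ≤ (W (2/3) ω - W (1/2) ω) + (W 1 ω - W (2/3) ω) := by
        simp only [mem_Iic, hX]
        constructor <;> intro <;> linarith
      have pair_eq : ((-(W (1/2) ω - W 0 ω)
            - ((W (2/3) ω - W (1/2) ω) + (W 1 ω - W (2/3) ω))/2,
          ((W (2/3) ω - W (1/2) ω) - (W 1 ω - W (2/3) ω))/2) : ℝ × ℝ)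
          = (X 0 ω, X (2/3) ω) := by
        have h0 : X 0 ω = W 0 ω - (W (1/2) ω + W 1 ω) / 2 := hX 0 ω
        have h23 : X (2/3) ω = W (2/3) ω - (W (1/2) ω + W 1 ω) / 2 := hX (2/3) ω
        rw [Prod.ext_iff]
        constructor
        · rw [h0]; ring
        · rw [h23]; ring
      have hC_iff : ω ∈ C ↔ (X 0 ω, X (2/3) ω) ∈ M := by
        rw [← hCM]; exact Iff.rfl
      simp only [mem_union, mem_diff, mem_preimage, badSet, mem_setOf_eq, hΦdef]
      rw [pair_eq, hA_iff, hC_iff]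
      tauto
    have hmapbad : P.map Φ (badSet M) = 0 := by
      rw [Measure.map_apply hΦm (badSet_meas M hM), ← hEq]
      exact hnull
    exact key_measure M hM (hac hmapbad)
  refine ⟨fun hMF => hkey ?_, hkey⟩
  intro A B hA hB
  have h := hMF 0 (2/3) le_rfl (by norm_num) (by norm_num)
  refine h A B ?_ ?_
  · exact le_iSup₂ (f := fun t (_ : t ∈ Icc (0:ℝ) (2/3)) =>
      MeasurableSpace.comap (X t) inferInstance) (1/2)
      (by constructor <;> norm_num) A hA
  · exact le_iSup₂ (f := fun t (_ : t ∈ Icc (0:ℝ) 1 \ Ioo 0 (2/3)) =>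
      MeasurableSpace.comap (X t) inferInstance) 1
      (by constructor
          · constructor <;> norm_num
          · simp [mem_Ioo]; norm_num) B hB
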